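/- For all positive integers n and k: ∑_{m=0}^{min(n,k)} (m!)² S(n+1,m+1) S(k+1,m+1) = ∑_{j=0}^{k} A(k,j) ∑_{m=0}^{j-1} (-1)^m C(j-1, m) (k+1-m)^n. -/

import Mathlib

/-- Stirling numbers of the second kind: `stirling n r` is the number of
partitions of an `n`-element set into `r` non-empty blocks. -/
def stirling : ℕ → ℕ → ℕ
  | 0, 0 => 1
  | 0, _ + 1 => 0
  | _ + 1, 0 => 0
  | n + 1, r + 1 => (r + 1) * stirling n (r + 1) + stirling n r
/-- The descent set of a permutation of `Fin k`: positions `i` (with `i+1 < k`)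
such that `π i > π (i+1)`. -/
def descentSet (k : ℕ) (π : Equiv.Perm (Fin k)) : Finset (Fin (k - 1)) :=
  Finset.univ.filter fun i =>
    π ⟨i.1 + 1, by have := i.isLt; omega⟩ < π ⟨i.1, by have := i.isLt; omega⟩

/-- The Eulerian number `eulerian k j` counts permutations of `{1,…,k}`
with exactly `j - 1` descents (equivalently, `j` ascending runs). -/
def eulerian (k j : ℕ) : ℕ :=
  (Finset.univ.filter fun π : Equiv.Perm (Fin k) =>
    (descentSet k π).card + 1 = j).card

lemma stirling_succ_zero (n : ℕ) : stirling (n+1) 0 = 0 := rfl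

lemma stirling_succ_succ (n r : ℕ) :
    stirling (n+1) (r+1) = (r + 1) * stirling n (r + 1) + stirling n r := rfl

lemma stirling_eq_zero_of_lt : ∀ {n r : ℕ}, n < r → stirling n r = 0 := by
  intro n
  induction n with
  | zero => intro r hr; match r, hr with | r+1, _ => rfl
  | succ n ih =>
    intro r hr
    match r, hr with
    | r+1, hr => rw [stirling_succ_succ, ih (by omega), ih (by omega)]; simp

open Finset in
lemma pow_eq_sum_stirling (k b : ℕ) :
    b ^ k = ∑ c ∈ range (k+1), c.factorial * stirling k c * b.choose c := by
  induction k with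
  | zero => simp [stirling]
  | succ k ih =>
    have key : ∀ c : ℕ, b * b.choose c = c * b.choose c + b.choose (c+1) * (c+1) := by
      intro c
      rw [Nat.choose_succ_right_eq]
      rcases le_or_gt c b with h | h
      · have h2 : c + (b - c) = b := by omega
        calc b * b.choose c = (c + (b-c)) * b.choose c := by rw [h2]
        _ = c * b.choose c + b.choose c * (b - c) := by ring
      · simp [Nat.choose_eq_zero_of_lt h]
    have e1 : ∑ c ∈ range (k+1), (c+1).factorial * ((c+1) * stirling k (c+1)) * b.choose (c+1)
        = ∑ c ∈ range (k+1), c.factorial * stirling k c * (c * b.choose c) := by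
      rw [Finset.sum_range_succ' (fun c => c.factorial * stirling k c * (c * b.choose c)) k,
          Finset.sum_range_succ (fun c => (c+1).factorial * ((c+1) * stirling k (c+1)) * b.choose (c+1)) k,
          stirling_eq_zero_of_lt (show k < k + 1 by omega)]
      simp only [mul_zero, zero_mul, add_zero, Nat.mul_zero, Nat.zero_mul]
      apply Finset.sum_congr rfl; intros; ring
    calc b ^ (k+1) = ∑ c ∈ range (k+1), c.factorial * stirling k c * (b * b.choose c) := by
          rw [pow_succ, ih, Finset.sum_mul]; apply Finset.sum_congr rfl; intros; ring
      _ = ∑ c ∈ range (k+1), c.factorial * stirling k c * (c * b.choose c)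
          + ∑ c ∈ range (k+1), (c+1).factorial * stirling k c * b.choose (c+1) := by
          rw [← Finset.sum_add_distrib]; apply Finset.sum_congr rfl; intro c _
          rw [key c, Nat.factorial_succ]; ring
      _ = ∑ c ∈ range (k+2), c.factorial * stirling (k+1) c * b.choose c := by
          rw [Finset.sum_range_succ' (fun c => c.factorial * stirling (k+1) c * b.choose c) (k+1)]
          simp only [stirling_succ_zero, stirling_succ_succ, ← e1]
          rw [← Finset.sum_add_distrib]
          simp only [mul_zero, zero_mul, add_zero, Nat.mul_zero, Nat.zero_mul]
          apply Finset.sum_congr rfl; intros; ring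

open Finset in
lemma succ_pow_eq_sum_stirling (n c : ℕ) :
    (c+1) ^ n = ∑ m ∈ range (n+1), m.factorial * stirling (n+1) (m+1) * c.choose m := by
  induction n with
  | zero => simp [stirling]
  | succ n ih =>
    have key : ∀ m : ℕ, (c+1) * c.choose m = (m+1) * c.choose (m+1) + (m+1) * c.choose m := by
      intro m
      have h1 := Nat.add_one_mul_choose_eq c m
      have h2 : (c+1).choose (m+1) = c.choose (m+1) + c.choose m := by
        rw [Nat.choose_succ_succ]; ring
      calc (c+1) * c.choose m = (c+1).choose (m+1) * (m+1) := by rw [← h1]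
        _ = (m+1) * c.choose (m+1) + (m+1) * c.choose m := by rw [h2]; ring
    have e1 : ∑ m ∈ range (n+2), m.factorial * ((m+1) * stirling (n+1) (m+1)) * c.choose m
        = ∑ m ∈ range (n+1), (m+1).factorial * stirling (n+1) (m+1) * c.choose m := by
      rw [Finset.sum_range_succ (fun m => m.factorial * ((m+1) * stirling (n+1) (m+1)) * c.choose m) (n+1),
          stirling_eq_zero_of_lt (show n+1 < n+2 by omega)]
      simp only [mul_zero, zero_mul, add_zero, Nat.mul_zero, Nat.zero_mul]
      apply Finset.sum_congr rfl; intros; rw [Nat.factorial_succ]; ring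
    have e2 : ∑ m ∈ range (n+2), m.factorial * stirling (n+1) m * c.choose m
        = ∑ m ∈ range (n+1), (m+1).factorial * stirling (n+1) (m+1) * c.choose (m+1) := by
      rw [Finset.sum_range_succ' (fun m => m.factorial * stirling (n+1) m * c.choose m) (n+1)]
      simp [stirling_succ_zero]
    calc (c+1) ^ (n+1)
        = ∑ m ∈ range (n+1), m.factorial * stirling (n+1) (m+1) * ((c+1) * c.choose m) := by
          rw [pow_succ, ih, Finset.sum_mul]; apply Finset.sum_congr rfl; intros; ring
      _ = ∑ m ∈ range (n+1), (m+1).factorial * stirling (n+1) (m+1) * c.choose (m+1)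
          + ∑ m ∈ range (n+1), (m+1).factorial * stirling (n+1) (m+1) * c.choose m := by
          rw [← Finset.sum_add_distrib]; apply Finset.sum_congr rfl; intro m _
          rw [key m, Nat.factorial_succ]; ring
      _ = ∑ m ∈ range (n+2), m.factorial * stirling (n+2) (m+1) * c.choose m := by
          have e3 : ∑ m ∈ range (n+2), m.factorial * stirling (n+2) (m+1) * c.choose m
              = ∑ m ∈ range (n+2), (m.factorial * ((m+1) * stirling (n+1) (m+1)) * c.choose m
                + m.factorial * stirling (n+1) m * c.choose m) :=
            Finset.sum_congr rfl (fun m _ => by rw [stirling_succ_succ (n+1) m]; ring)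
          rw [e3, Finset.sum_add_distrib, e1, e2, Nat.add_comm]

open Finset in
lemma stirling_alt (k : ℕ) : ∀ m : ℕ,
    ∑ c ∈ range (k+1), (-1:ℤ)^(k+c) * c.factorial * stirling k c * c.choose m
      = m.factorial * stirling (k+1) (m+1) := by
  induction k with
  | zero =>
    intro m
    match m with
    | 0 => simp [stirling]
    | m+1 => simp [stirling, stirling_eq_zero_of_lt]
  | succ k ih =>
    intro m
    have step1 : ∑ c ∈ range (k+2), (-1:ℤ)^(k+1+c) * c.factorial * stirling (k+1) c * c.choose m
        = ∑ c ∈ range (k+1), (-1:ℤ)^(k+c) * ((c+1).factorial * ((c+1) * stirling k (c+1)) * (c+1).choose m)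
          + ∑ c ∈ range (k+1), (-1:ℤ)^(k+c) * (c.factorial * stirling k c * ((c+1) * (c+1).choose m)) := by
      rw [Finset.sum_range_succ'
        (fun c => (-1:ℤ)^(k+1+c) * c.factorial * stirling (k+1) c * c.choose m) (k+1)]
      rw [stirling_succ_zero]
      rw [← Finset.sum_add_distrib]
      simp only [Nat.cast_zero, mul_zero, zero_mul, add_zero]
      apply Finset.sum_congr rfl
      intro c _
      have hsgn : (-1:ℤ)^(k+1+(c+1)) = (-1:ℤ)^(k+c) := by
        have h : k+1+(c+1) = k+c+2 := by ring
        rw [h, pow_add]; norm_num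
      rw [hsgn, stirling_succ_succ k c, Nat.factorial_succ]
      push_cast
      ring
    have eA : ∑ c ∈ range (k+1), (-1:ℤ)^(k+c) * ((c+1).factorial * ((c+1) * stirling k (c+1)) * (c+1).choose m)
        = - ∑ c ∈ range (k+1), (-1:ℤ)^(k+c) * c.factorial * (stirling k c) * c * c.choose m := by
      set F : ℕ → ℤ := fun c => (-1:ℤ)^(k+c) * c.factorial * stirling k c * c * c.choose m with hF
      have h1 : ∀ c, (-1:ℤ)^(k+c) * ((c+1).factorial * ((c+1) * stirling k (c+1)) * (c+1).choose m)
          = - F (c+1) := by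
        intro c
        simp only [hF]
        have hsgn : (-1:ℤ)^(k+(c+1)) = -(-1:ℤ)^(k+c) := by
          have h : k+(c+1) = (k+c)+1 := by ring
          rw [h, pow_succ]; ring
        rw [hsgn, Nat.factorial_succ]
        push_cast
        ring
      calc ∑ c ∈ range (k+1), (-1:ℤ)^(k+c) * ((c+1).factorial * ((c+1) * stirling k (c+1)) * (c+1).choose m)
          = ∑ c ∈ range (k+1), - F (c+1) := Finset.sum_congr rfl (fun c _ => h1 c)
        _ = - ∑ c ∈ range (k+1), F (c+1) := by rw [Finset.sum_neg_distrib]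
        _ = - ∑ c ∈ range (k+2), F c := by
            rw [Finset.sum_range_succ' F (k+1)]
            simp only [hF, Nat.cast_zero, mul_zero, zero_mul, add_zero]
        _ = - ∑ c ∈ range (k+1), F c := by
            rw [Finset.sum_range_succ F (k+1)]
            have hz : stirling k (k+1) = 0 := stirling_eq_zero_of_lt (by omega)
            simp [hF, hz]
    have step2 : ∑ c ∈ range (k+2), (-1:ℤ)^(k+1+c) * c.factorial * stirling (k+1) c * c.choose m
        = ∑ c ∈ range (k+1), (-1:ℤ)^(k+c) * c.factorial * stirling k c *
            (((c+1) * (c+1).choose m : ℤ) - c * c.choose m) := by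
      rw [step1, eA]
      rw [show ∀ a b : ℤ, -a + b = b - a from fun a b => by ring]
      rw [← Finset.sum_sub_distrib]
      apply Finset.sum_congr rfl
      intro c _
      ring
    rw [step2]
    match m with
    | 0 =>
      have e0 : ∀ c : ℕ, (((c+1) * (c+1).choose 0 : ℤ) - c * c.choose 0) = c.choose 0 := by
        intro c; simp
      calc ∑ c ∈ range (k+1), (-1:ℤ)^(k+c) * c.factorial * stirling k c *
              (((c+1) * (c+1).choose 0 : ℤ) - c * c.choose 0)
          = ∑ c ∈ range (k+1), (-1:ℤ)^(k+c) * c.factorial * stirling k c * c.choose 0 :=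
            Finset.sum_congr rfl (fun c _ => by rw [e0 c])
        _ = (0:ℕ).factorial * stirling (k+1) 1 := ih 0
        _ = (0:ℕ).factorial * stirling (k+2) 1 := by
            rw [show stirling (k+2) 1 = 1 * stirling (k+1) 1 + stirling (k+1) 0 from
              stirling_succ_succ (k+1) 0, stirling_succ_zero]
            simp
    | m'+1 =>
      have key : ∀ c : ℕ, (((c+1) * (c+1).choose (m'+1) : ℤ) - c * c.choose (m'+1))
          = (m'+2) * c.choose (m'+1) + (m'+1) * c.choose m' := by
        intro c
        have p : ((c+1).choose (m'+1) : ℤ) = c.choose m' + c.choose (m'+1) := by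
          exact_mod_cast congrArg (Nat.cast : ℕ → ℤ) (Nat.choose_succ_succ c m')
        have q : ((c+1) * c.choose m' : ℤ) = ((c+1).choose (m'+1) : ℤ) * (m'+1) := by
          exact_mod_cast congrArg (Nat.cast : ℕ → ℤ) (Nat.add_one_mul_choose_eq c m')
        linear_combination ((c:ℤ) + m' + 2) * p + q
      calc ∑ c ∈ range (k+1), (-1:ℤ)^(k+c) * c.factorial * stirling k c *
              (((c+1) * (c+1).choose (m'+1) : ℤ) - c * c.choose (m'+1))
          = ∑ c ∈ range (k+1), ((m'+2) * ((-1:ℤ)^(k+c) * c.factorial * stirling k c * c.choose (m'+1))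
              + (m'+1) * ((-1:ℤ)^(k+c) * c.factorial * stirling k c * c.choose m')) := by
            apply Finset.sum_congr rfl
            intro c _
            rw [key c]
            ring
        _ = (m'+2) * ((m'+1).factorial * stirling (k+1) (m'+2))
            + (m'+1) * (m'.factorial * stirling (k+1) (m'+1)) := by
            rw [Finset.sum_add_distrib, ← Finset.mul_sum, ← Finset.mul_sum, ih (m'+1), ih m']
        _ = (m'+1).factorial * stirling (k+2) (m'+2) := by
            rw [show stirling (k+2) (m'+2) = (m'+2) * stirling (k+1) (m'+2) + stirling (k+1) (m'+1) from
              stirling_succ_succ (k+1) (m'+1), Nat.factorial_succ (m')]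
            push_cast
            ring

open Finset in
lemma binomial_inversion (k : ℕ) (f g : ℕ → ℤ)
    (h : ∀ b ≤ k, ∑ c ∈ range (k+1), f c * (b.choose c : ℤ)
        = ∑ c ∈ range (k+1), g c * (b.choose c : ℤ)) :
    ∀ c ≤ k, f c = g c := by
  intro c
  induction c using Nat.strong_induction_on with
  | _ c ih =>
    intro hck
    have hb := h c hck
    have trunc : ∀ F : ℕ → ℤ, ∑ c' ∈ range (k+1), F c' * (c.choose c' : ℤ)
        = ∑ c' ∈ range (c+1), F c' * (c.choose c' : ℤ) := by
      intro F
      apply (Finset.sum_subset (by intro x hx; simp at *; omega) ?_).symm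
      intro x _ hx
      simp only [mem_range, not_lt] at hx
      rw [Nat.choose_eq_zero_of_lt (by omega)]
      simp
    rw [trunc f, trunc g, Finset.sum_range_succ, Finset.sum_range_succ] at hb
    have tails : ∑ c' ∈ range c, f c' * (c.choose c' : ℤ)
        = ∑ c' ∈ range c, g c' * (c.choose c' : ℤ) := by
      apply Finset.sum_congr rfl
      intro x hx
      simp only [mem_range] at hx
      rw [ih x hx (by omega)]
    rw [tails] at hb
    simpa using hb

namespace WorpAux

variable {k b : ℕ}

def dSet (π : Equiv.Perm (Fin (k+1))) : Finset (Fin k) := descentSet (k+1) π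

/-- number of descents of `π` in positions `< t` -/
def dc (π : Equiv.Perm (Fin (k+1))) (t : ℕ) : ℕ :=
  ((dSet π).filter (fun j : Fin k => (j : ℕ) < t)).card

/-- sorting key: order by value, ties broken by decreasing index -/
def key (f : Fin (k+1) → Fin b) : Fin (k+1) → ℕ :=
  fun x => (f x : ℕ) * (k+1) + (k - (x : ℕ))

def hfun (π : Equiv.Perm (Fin (k+1))) (f : Fin (k+1) → Fin b) : Fin (k+1) → ℕ :=
  fun i => (f (π i) : ℕ) + dc π (i : ℕ)

lemma mem_descent (π : Equiv.Perm (Fin (k+1))) (i : Fin k) :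
    i ∈ dSet π ↔ π i.succ < π i.castSucc := by
  simp only [dSet, descentSet, Finset.mem_filter, Finset.mem_univ, true_and]
  constructor
  · intro h; convert h using 2 <;> exact Fin.ext rfl
  · intro h; convert h using 2 <;> exact Fin.ext rfl

lemma dc_le_card (π : Equiv.Perm (Fin (k+1))) (t : ℕ) :
    dc π t ≤ (dSet π).card := Finset.card_filter_le _ _

lemma dc_le (π : Equiv.Perm (Fin (k+1))) (t : ℕ) : dc π t ≤ t := by
  have : ((dSet π).filter (fun j : Fin k => (j : ℕ) < t)).card
      ≤ (Finset.range t).card := by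
    apply Finset.card_le_card_of_injOn (fun j : Fin k => (j : ℕ))
    · intro j hj
      simp only [Finset.mem_coe, Finset.mem_filter] at hj
      simp [hj.2]
    · intro j1 _ j2 _ h
      exact Fin.ext h
  simpa [dc] using this

lemma card_le_dc_add (π : Equiv.Perm (Fin (k+1))) (t : ℕ) :
    (dSet π).card ≤ dc π t + (k - t) := by
  have hsplit := Finset.card_filter_add_card_filter_not
    (s := dSet π) (p := fun j : Fin k => (j : ℕ) < t)
  have hle : ((dSet π).filter (fun j : Fin k => ¬ (j : ℕ) < t)).card
      ≤ (Finset.range (k - t)).card := by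
    apply Finset.card_le_card_of_injOn (fun j : Fin k => (j : ℕ) - t)
    · intro j hj
      simp only [Finset.mem_coe, Finset.mem_filter, not_lt] at hj
      have := j.isLt
      simp only [Finset.mem_coe, Finset.mem_range]
      omega
    · intro j1 hj1 j2 hj2 h
      have m1 := (Finset.mem_filter.mp (Finset.mem_coe.mp hj1)).2
      have m2 := (Finset.mem_filter.mp (Finset.mem_coe.mp hj2)).2
      simp only [not_lt] at m1 m2
      have h' : (j1 : ℕ) - t = (j2 : ℕ) - t := h
      exact Fin.ext (by omega)
  simp only [Finset.card_range] at hle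
  simp only [dc]
  omega

lemma dc_succ (π : Equiv.Perm (Fin (k+1))) (i : Fin k) :
    dc π ((i : ℕ) + 1) = dc π (i : ℕ) + (if i ∈ dSet π then 1 else 0) := by
  classical
  unfold dc
  have hsplit : (dSet π).filter (fun j : Fin k => (j : ℕ) < (i : ℕ) + 1)
      = (dSet π).filter (fun j : Fin k => (j : ℕ) < (i : ℕ))
        ∪ (dSet π).filter (fun j : Fin k => j = i) := by
    rw [← Finset.filter_or]
    apply Finset.filter_congr
    intro j _
    constructor
    · intro h
      rcases Nat.lt_succ_iff_lt_or_eq.mp h with h' | h'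
      · exact Or.inl h'
      · exact Or.inr (Fin.ext h')
    · rintro (h | rfl)
      · omega
      · omega
  rw [hsplit, Finset.card_union_of_disjoint]
  · congr 1
    rw [Finset.filter_eq']
    split <;> simp
  · rw [Finset.disjoint_filter]
    rintro j _ hj rfl
    omega

lemma sm_step {g : Fin (k+1) → ℕ} (hg : StrictMono g) :
    ∀ t : ℕ, ∀ i : Fin (k+1), ∀ h : (i : ℕ) + t ≤ k, g i + t ≤ g ⟨(i : ℕ) + t, by omega⟩ := by
  intro t
  induction t with
  | zero =>
    intro i h
    have : (⟨(i : ℕ) + 0, by omega⟩ : Fin (k+1)) = i := Fin.ext (by simp)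
    rw [this]
    simp
  | succ t ih =>
    intro i h
    have h1 := ih i (by omega)
    have h2 : g ⟨(i : ℕ) + t, by omega⟩ < g ⟨(i : ℕ) + (t+1), by omega⟩ := by
      apply hg
      simp [Fin.lt_def]
    omega

lemma le_apply_sm {g : Fin (k+1) → ℕ} (hg : StrictMono g) (i : Fin (k+1)) :
    (i : ℕ) ≤ g i := by
  have := sm_step hg (i : ℕ) ⟨0, by omega⟩ (by simp only [Fin.val_mk]; have := i.isLt; omega)
  have h0 : (⟨(0 : ℕ) + (i : ℕ), by have := i.isLt; omega⟩ : Fin (k+1)) = i :=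
    Fin.ext (by simp)
  rw [h0] at this
  omega

lemma gap_sm {g : Fin (k+1) → ℕ} (hg : StrictMono g) (i : Fin (k+1)) :
    g i + (k - (i : ℕ)) ≤ g ⟨k, Nat.lt_succ_self k⟩ := by
  have := sm_step hg (k - (i : ℕ)) i (by have := i.isLt; omega)
  have h0 : (⟨(i : ℕ) + (k - (i : ℕ)), by have := i.isLt; omega⟩ : Fin (k+1))
      = ⟨k, Nat.lt_succ_self k⟩ := Fin.ext (by have := i.isLt; simp; omega)
  rw [h0] at this
  exact this

end WorpAux

namespace WorpAux

variable {k b : ℕ}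

lemma key_injective (f : Fin (k+1) → Fin b) : Function.Injective (key f) := by
  have div_eq : ∀ a r : ℕ, r < k + 1 → (a * (k+1) + r) / (k+1) = a := by
    intro a r h
    rw [mul_comm, Nat.mul_add_div (Nat.succ_pos k), Nat.div_eq_of_lt h, Nat.add_zero]
  intro x y hxy
  have hx := x.isLt
  have hy := y.isLt
  have hdx : k - (x : ℕ) < k + 1 := by omega
  have hdy : k - (y : ℕ) < k + 1 := by omega
  have hxy' : (f x : ℕ) * (k+1) + (k - (x : ℕ)) = (f y : ℕ) * (k+1) + (k - (y : ℕ)) := hxy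
  have hval : (f x : ℕ) = (f y : ℕ) := by
    rw [← div_eq ((f x : ℕ)) _ hdx, ← div_eq ((f y : ℕ)) _ hdy, hxy']
  rw [hval] at hxy'
  have hoff := Nat.add_left_cancel hxy'
  exact Fin.ext (by omega)

lemma adj_iff (π : Equiv.Perm (Fin (k+1))) (f : Fin (k+1) → Fin b) (i : Fin k) :
    (key f (π i.castSucc) < key f (π i.succ)) ↔ (hfun π f i.castSucc < hfun π f i.succ) := by
  have claim1 : ∀ a a' x x' : ℕ, x ≤ k → x' ≤ k →
      (a * (k+1) + (k - x) < a' * (k+1) + (k - x') ↔ (a < a' ∨ (a = a' ∧ x' < x))) := by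
    intro a a' x x' hx hx'
    rcases Nat.lt_trichotomy a a' with hc | hc | hc
    · have hm : a * (k+1) + (k+1) ≤ a' * (k+1) := by
        calc a * (k+1) + (k+1) = (a+1) * (k+1) := by ring
          _ ≤ a' * (k+1) := Nat.mul_le_mul_right (k+1) (by omega)
      set A := a * (k+1) with hA
      set A' := a' * (k+1) with hA'
      omega
    · have hm : a * (k+1) = a' * (k+1) := by rw [hc]
      set A := a * (k+1) with hA
      set A' := a' * (k+1) with hA'
      omega
    · have hm : a' * (k+1) + (k+1) ≤ a * (k+1) := by
        calc a' * (k+1) + (k+1) = (a'+1) * (k+1) := by ring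
          _ ≤ a * (k+1) := Nat.mul_le_mul_right (k+1) (by omega)
      set A := a * (k+1) with hA
      set A' := a' * (k+1) with hA'
      omega
  have hx : ((π i.castSucc : Fin (k+1)) : ℕ) ≤ k := by
    have := (π i.castSucc).isLt; omega
  have hx' : ((π i.succ : Fin (k+1)) : ℕ) ≤ k := by
    have := (π i.succ).isLt; omega
  have c1 := claim1 (f (π i.castSucc) : ℕ) (f (π i.succ) : ℕ)
    ((π i.castSucc : Fin (k+1)) : ℕ) ((π i.succ : Fin (k+1)) : ℕ) hx hx'
  have c2 : (hfun π f i.castSucc < hfun π f i.succ)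
      ↔ ((f (π i.castSucc) : ℕ) < (f (π i.succ) : ℕ)
        ∨ ((f (π i.castSucc) : ℕ) = (f (π i.succ) : ℕ)
            ∧ ((π i.succ : Fin (k+1)) : ℕ) < ((π i.castSucc : Fin (k+1)) : ℕ))) := by
    show (f (π i.castSucc) : ℕ) + dc π ((i.castSucc : Fin (k+1)) : ℕ)
        < (f (π i.succ) : ℕ) + dc π ((i.succ : Fin (k+1)) : ℕ) ↔ _
    rw [show ((i.castSucc : Fin (k+1)) : ℕ) = (i : ℕ) from rfl,
        show ((i.succ : Fin (k+1)) : ℕ) = (i : ℕ) + 1 from rfl,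
        dc_succ π i]
    by_cases hd : i ∈ dSet π
    · have hlt : π i.succ < π i.castSucc := (mem_descent π i).mp hd
      have hlt' : ((π i.succ : Fin (k+1)) : ℕ) < ((π i.castSucc : Fin (k+1)) : ℕ) := hlt
      simp only [hd, if_true]
      omega
    · have hge : ¬ π i.succ < π i.castSucc := fun h => hd ((mem_descent π i).mpr h)
      have hge' : ¬ ((π i.succ : Fin (k+1)) : ℕ) < ((π i.castSucc : Fin (k+1)) : ℕ) := hge
      simp only [hd, if_false]
      omega
  exact c1.trans c2.symm

lemma mem_fiber_iff (π : Equiv.Perm (Fin (k+1))) (f : Fin (k+1) → Fin b) :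
    Tuple.sort (key f) = π ↔ StrictMono (hfun π f) := by
  rw [eq_comm, Tuple.eq_sort_iff]
  constructor
  · rintro ⟨hmono, -⟩
    have hsm : StrictMono (key f ∘ π) :=
      hmono.strictMono_of_injective ((key_injective f).comp π.injective)
    rw [Fin.strictMono_iff_lt_succ] at hsm ⊢
    intro i
    exact (adj_iff π f i).mp (hsm i)
  · intro hsm
    have h2 : StrictMono (key f ∘ π) := by
      rw [Fin.strictMono_iff_lt_succ]
      intro i
      exact (adj_iff π f i).mpr ((Fin.strictMono_iff_lt_succ.mp hsm) i)
    refine ⟨h2.monotone, fun i j hij heq => ?_⟩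
    exact (absurd (π.injective (key_injective f heq)) (ne_of_lt hij) : False).elim

lemma hfun_lt (π : Equiv.Perm (Fin (k+1))) (f : Fin (k+1) → Fin b) (i : Fin (k+1)) :
    hfun π f i < b + (dSet π).card := by
  have h1 : (f (π i) : ℕ) < b := (f (π i)).isLt
  have h2 := dc_le_card π (i : ℕ)
  unfold hfun
  omega

end WorpAux

namespace WorpAux

variable {k b : ℕ}

lemma emb_facts (π : Equiv.Perm (Fin (k+1))) {s : Finset (Fin (b + (dSet π).card))}
    (hcard : s.card = k+1) (i : Fin (k+1)) :
    dc π (i : ℕ) ≤ (s.orderEmbOfFin hcard i : ℕ)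
      ∧ (s.orderEmbOfFin hcard i : ℕ) - dc π (i : ℕ) < b := by
  have hsm : StrictMono (fun i : Fin (k+1) => (s.orderEmbOfFin hcard i : ℕ)) :=
    fun i j hij => (s.orderEmbOfFin hcard).strictMono hij
  have h1 := le_apply_sm hsm i
  have h2 := dc_le π (i : ℕ)
  have h3 := gap_sm hsm i
  have h4 : ((s.orderEmbOfFin hcard ⟨k, Nat.lt_succ_self k⟩ : Fin (b + (dSet π).card)) : ℕ)
      < b + (dSet π).card := (s.orderEmbOfFin hcard ⟨k, Nat.lt_succ_self k⟩).isLt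
  have h5 := card_le_dc_add π (i : ℕ)
  have h6 := i.isLt
  constructor <;> omega

lemma hfun_eq_emb (π : Equiv.Perm (Fin (k+1))) {s : Finset (Fin (b + (dSet π).card))}
    (hcard : s.card = k+1) (g : Fin (k+1) → Fin b)
    (hg : ∀ x, (g x : ℕ) = (s.orderEmbOfFin hcard (π.symm x) : ℕ)
        - dc π ((π.symm x : Fin (k+1)) : ℕ)) (i : Fin (k+1)) :
    hfun π g i = (s.orderEmbOfFin hcard i : ℕ) := by
  have h1 : π.symm (π i) = i := Equiv.symm_apply_apply π i
  have h2 := hg (π i)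
  rw [h1] at h2
  have h3 := (emb_facts π hcard i).1
  unfold hfun
  omega

lemma fiber_aux (π : Equiv.Perm (Fin (k+1))) {s : Finset (Fin (b + (dSet π).card))}
    (hcard : s.card = k+1) (g : Fin (k+1) → Fin b)
    (hg : ∀ x, (g x : ℕ) = (s.orderEmbOfFin hcard (π.symm x) : ℕ)
        - dc π ((π.symm x : Fin (k+1)) : ℕ)) :
    StrictMono (hfun π g) := by
  rw [funext (hfun_eq_emb π hcard g hg)]
  exact fun i j hij => (s.orderEmbOfFin hcard).strictMono hij

lemma right_aux (π : Equiv.Perm (Fin (k+1))) {s : Finset (Fin (b + (dSet π).card))}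
    (hcard : s.card = k+1) (g : Fin (k+1) → Fin b)
    (hg : ∀ x, (g x : ℕ) = (s.orderEmbOfFin hcard (π.symm x) : ℕ)
        - dc π ((π.symm x : Fin (k+1)) : ℕ))
    (pf : ∀ i, hfun π g i < b + (dSet π).card) :
    Finset.image (fun i : Fin (k+1) =>
      (⟨hfun π g i, pf i⟩ : Fin (b + (dSet π).card))) Finset.univ = s := by
  have hfunEq : (fun i : Fin (k+1) => (⟨hfun π g i, pf i⟩ : Fin (b + (dSet π).card)))
      = ⇑(s.orderEmbOfFin hcard) :=
    funext fun i => Fin.ext (hfun_eq_emb π hcard g hg i)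
  rw [hfunEq]
  apply Finset.coe_injective
  rw [Finset.coe_image, Finset.coe_univ, Set.image_univ, Finset.range_orderEmbOfFin]

lemma left_aux (π : Equiv.Perm (Fin (k+1))) (f : Fin (k+1) → Fin b)
    (hsm : StrictMono (hfun π f))
    {s' : Finset (Fin (b + (dSet π).card))}
    (hs' : s' = Finset.image (fun i : Fin (k+1) =>
      (⟨hfun π f i, hfun_lt π f i⟩ : Fin (b + (dSet π).card))) Finset.univ)
    (hcard : s'.card = k+1) (x : Fin (k+1)) :
    (s'.orderEmbOfFin hcard (π.symm x) : ℕ) - dc π ((π.symm x : Fin (k+1)) : ℕ)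
      = (f x : ℕ) := by
  subst hs'
  have hEq : (fun i : Fin (k+1) => (⟨hfun π f i, hfun_lt π f i⟩ : Fin (b + (dSet π).card)))
      = ⇑(Finset.orderEmbOfFin _ hcard) := by
    apply Finset.orderEmbOfFin_unique
    · intro i
      exact Finset.mem_image_of_mem _ (Finset.mem_univ i)
    · intro i j hij
      exact hsm hij
  rw [← hEq]
  show hfun π f (π.symm x) - dc π ((π.symm x : Fin (k+1)) : ℕ) = (f x : ℕ)
  unfold hfun
  rw [Equiv.apply_symm_apply]
  omega

open Finset in
lemma fiber_card (π : Equiv.Perm (Fin (k+1))) (b : ℕ) :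
    ((Finset.univ : Finset (Fin (k+1) → Fin b)).filter
        (fun f => Tuple.sort (key f) = π)).card
      = (b + (dSet π).card).choose (k+1) := by
  classical
  have hcardt : ((Finset.univ : Finset (Fin (b + (dSet π).card))).powersetCard (k+1)).card
      = (b + (dSet π).card).choose (k+1) := by
    rw [Finset.card_powersetCard, Finset.card_univ, Fintype.card_fin]
  rw [← hcardt]
  refine Finset.card_bij'
    (i := fun f _ => Finset.image
      (fun i : Fin (k+1) => (⟨hfun π f i, hfun_lt π f i⟩ : Fin (b + (dSet π).card)))
      Finset.univ)
    (j := fun s hs => fun x : Fin (k+1) =>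
      (⟨(s.orderEmbOfFin (Finset.mem_powersetCard.mp hs).2 (π.symm x) : ℕ)
          - dc π ((π.symm x : Fin (k+1)) : ℕ),
        (emb_facts π (Finset.mem_powersetCard.mp hs).2 (π.symm x)).2⟩ : Fin b))
    ?_ ?_ ?_ ?_
  · -- hi : image lands in powersetCard
    intro f hf
    have hsm : StrictMono (hfun π f) :=
      (mem_fiber_iff π f).mp (Finset.mem_filter.mp hf).2
    rw [Finset.mem_powersetCard]
    refine ⟨Finset.subset_univ _, ?_⟩
    rw [Finset.card_image_of_injective _ ?_, Finset.card_univ, Fintype.card_fin]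
    intro i j hij
    have : hfun π f i = hfun π f j := congrArg Fin.val hij
    exact hsm.injective this
  · -- hj : backward map lands in the fiber
    intro s hs
    rw [Finset.mem_filter]
    exact ⟨Finset.mem_univ _, (mem_fiber_iff π _).mpr
      (fiber_aux π (Finset.mem_powersetCard.mp hs).2 _ (fun x => rfl))⟩
  · -- left inverse
    intro f hf
    have hsm : StrictMono (hfun π f) :=
      (mem_fiber_iff π f).mp (Finset.mem_filter.mp hf).2
    funext x
    exact Fin.ext (left_aux π f hsm rfl _ x)
  · -- right inverse
    intro s hs
    exact right_aux π (Finset.mem_powersetCard.mp hs).2 _ (fun x => rfl) _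

end WorpAux

open Finset in
lemma worpitzky (k b : ℕ) (hk : 0 < k) :
    ∑ π : Equiv.Perm (Fin k), (b + (descentSet k π).card).choose k = b ^ k := by
  obtain ⟨k', rfl⟩ : ∃ k', k = k' + 1 := ⟨k - 1, by omega⟩
  classical
  calc ∑ π : Equiv.Perm (Fin (k'+1)), (b + (descentSet (k'+1) π).card).choose (k'+1)
      = ∑ π : Equiv.Perm (Fin (k'+1)),
          ((Finset.univ : Finset (Fin (k'+1) → Fin b)).filter
            (fun f => Tuple.sort (WorpAux.key f) = π)).card := by
        apply Finset.sum_congr rfl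
        intro π _
        rw [WorpAux.fiber_card π b]
        rfl
    _ = (Finset.univ : Finset (Fin (k'+1) → Fin b)).card :=
        (Finset.card_eq_sum_card_fiberwise (fun f _ => Finset.mem_univ _)).symm
    _ = b ^ (k'+1) := by
        rw [Finset.card_univ, Fintype.card_fun, Fintype.card_fin, Fintype.card_fin]


lemma descent_card_le (k : ℕ) (π : Equiv.Perm (Fin k)) :
    (descentSet k π).card ≤ k - 1 := by
  calc (descentSet k π).card ≤ (Finset.univ : Finset (Fin (k-1))).card :=
        Finset.card_filter_le _ _
    _ = k - 1 := by simp

open Finset in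
lemma sum_choose_descent (k : ℕ) (hk : 0 < k) (m : ℕ) (hm : m ≤ k) :
    ∑ π : Equiv.Perm (Fin k), (((descentSet k π).card.choose m : ℕ) : ℤ)
      = ((k-m).factorial * stirling k (k-m) : ℕ) := by
  have main : ∀ b ≤ k,
      ∑ c ∈ range (k+1), (fun c => ∑ π : Equiv.Perm (Fin k),
          (((descentSet k π).card.choose (k - c) : ℕ) : ℤ)) c * (b.choose c : ℤ)
      = ∑ c ∈ range (k+1), (fun c => ((c.factorial * stirling k c : ℕ) : ℤ)) c * (b.choose c : ℤ) := by
    intro b _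
    have rhs : ∑ c ∈ range (k+1), ((c.factorial * stirling k c : ℕ) : ℤ) * (b.choose c : ℤ)
        = ((b ^ k : ℕ) : ℤ) := by
      rw [pow_eq_sum_stirling k b]
      push_cast
      ring
    have lhs : ∑ c ∈ range (k+1), (∑ π : Equiv.Perm (Fin k),
          (((descentSet k π).card.choose (k - c) : ℕ) : ℤ)) * (b.choose c : ℤ)
        = ((b ^ k : ℕ) : ℤ) := by
      rw [← worpitzky k b hk]
      push_cast
      simp only [Finset.sum_mul]
      rw [Finset.sum_comm]
      apply Finset.sum_congr rfl
      intro π _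
      rw [Nat.add_choose_eq b ((descentSet k π).card) k,
          Finset.Nat.sum_antidiagonal_eq_sum_range_succ_mk]
      push_cast
      apply Finset.sum_congr rfl
      intros; ring
    simpa using lhs.trans rhs.symm
  have := binomial_inversion k _ _ main (k - m) (by omega)
  rw [show k - (k - m) = m by omega] at this
  exact this

open Finset in
theorem polyBernoulli_eq_eulerian_incl_excl (n k : ℕ) (hn : 0 < n) (hk : 0 < k) :
    (∑ m ∈ Finset.range (min n k + 1),
        ((Nat.factorial m) ^ 2 * stirling (n + 1) (m + 1) * stirling (k + 1) (m + 1) : ℤ)) =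
      ∑ j ∈ Finset.range (k + 1), (eulerian k j : ℤ) *
        ∑ m ∈ Finset.range (j - 1 + 1),
          (-1 : ℤ) ^ m * Nat.choose (j - 1) m * ((k + 1 - m : ℕ) : ℤ) ^ n := by
  set D : Equiv.Perm (Fin k) → ℕ := fun π => (descentSet k π).card with hD
  have hDlt : ∀ π, D π + 1 < k + 1 := by
    intro π
    have := descent_card_le k π
    simp only [hD]
    omega
  set Inner : ℕ → ℤ := fun j => ∑ m ∈ Finset.range (j - 1 + 1),
      (-1 : ℤ) ^ m * Nat.choose (j - 1) m * ((k + 1 - m : ℕ) : ℤ) ^ n with hInner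
  -- Step 1: group RHS as sum over permutations
  have step1 : ∑ j ∈ Finset.range (k + 1), (eulerian k j : ℤ) * Inner j
      = ∑ π : Equiv.Perm (Fin k), Inner (D π + 1) := by
    rw [← Finset.sum_fiberwise_of_maps_to (g := fun π => D π + 1)
      (t := Finset.range (k+1)) (fun π _ => Finset.mem_range.mpr (hDlt π))]
    apply Finset.sum_congr rfl
    intro j _
    have hcongr : ∀ π ∈ Finset.univ.filter (fun π : Equiv.Perm (Fin k) => D π + 1 = j),
        Inner (D π + 1) = Inner j := fun π hπ => by rw [(Finset.mem_filter.mp hπ).2]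
    rw [Finset.sum_congr rfl hcongr, Finset.sum_const, nsmul_eq_mul]
    congr 1
  -- Step 2: rewrite each Inner term and extend the inner range to k+1
  have step2 : ∀ π : Equiv.Perm (Fin k), Inner (D π + 1)
      = ∑ m ∈ Finset.range (k + 1),
          (-1 : ℤ) ^ m * Nat.choose (D π) m * ((k + 1 - m : ℕ) : ℤ) ^ n := by
    intro π
    simp only [hInner, Nat.add_sub_cancel]
    apply Finset.sum_subset
    · intro x hx
      simp only [Finset.mem_range] at *
      have := hDlt π
      omega
    · intro x _ hx
      simp only [Finset.mem_range, not_lt] at hx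
      rw [Nat.choose_eq_zero_of_lt (by omega)]
      simp
  -- Step 3: swap sums and apply sum_choose_descent
  have step3 : ∑ π : Equiv.Perm (Fin k), Inner (D π + 1)
      = ∑ m ∈ Finset.range (k + 1),
          (-1 : ℤ) ^ m * (((k-m).factorial * stirling k (k-m) : ℕ) : ℤ) * ((k + 1 - m : ℕ) : ℤ) ^ n := by
    rw [Finset.sum_congr rfl (fun π _ => step2 π), Finset.sum_comm]
    apply Finset.sum_congr rfl
    intro m hm
    simp only [Finset.mem_range] at hm
    rw [← sum_choose_descent k hk m (by omega)]
    rw [Finset.mul_sum, Finset.sum_mul]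
  -- Step 4: reflect the sum
  have sgn : ∀ c ≤ k, (-1:ℤ)^(k-c) = (-1:ℤ)^(k+c) := by
    intro c hc
    have h : k + c = (k - c) + 2 * c := by omega
    rw [h, pow_add, pow_mul]
    norm_num
  have step4 : ∑ m ∈ Finset.range (k + 1),
          (-1 : ℤ) ^ m * (((k-m).factorial * stirling k (k-m) : ℕ) : ℤ) * ((k + 1 - m : ℕ) : ℤ) ^ n
      = ∑ c ∈ Finset.range (k + 1),
          (-1 : ℤ) ^ (k+c) * ((c.factorial * stirling k c : ℕ) : ℤ) * (((c+1 : ℕ)) : ℤ) ^ n := by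
    rw [← Finset.sum_range_reflect]
    apply Finset.sum_congr rfl
    intro c hc
    simp only [Finset.mem_range] at hc
    rw [show k + 1 - 1 - c = k - c from rfl]
    rw [show k - (k - c) = c by omega, show k + 1 - (k - c) = c + 1 by omega,
        sgn c (by omega)]
  -- Step 5: expand (c+1)^n and apply stirling_alt
  have step5 : ∑ c ∈ Finset.range (k + 1),
          (-1 : ℤ) ^ (k+c) * ((c.factorial * stirling k c : ℕ) : ℤ) * (((c+1 : ℕ)) : ℤ) ^ n
      = ∑ m ∈ Finset.range (n + 1),
          ((Nat.factorial m) ^ 2 * stirling (n + 1) (m + 1) * stirling (k + 1) (m + 1) : ℤ) := by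
    have expand : ∀ c : ℕ, (((c+1 : ℕ)) : ℤ) ^ n
        = ∑ m ∈ Finset.range (n + 1),
            ((m.factorial * stirling (n+1) (m+1) * c.choose m : ℕ) : ℤ) := by
      intro c
      rw [show (((c+1 : ℕ)) : ℤ) ^ n = (((c+1)^n : ℕ) : ℤ) by push_cast; ring]
      rw [succ_pow_eq_sum_stirling n c]
      push_cast
      ring
    calc ∑ c ∈ Finset.range (k + 1),
          (-1 : ℤ) ^ (k+c) * ((c.factorial * stirling k c : ℕ) : ℤ) * (((c+1 : ℕ)) : ℤ) ^ n
        = ∑ m ∈ Finset.range (n + 1), ∑ c ∈ Finset.range (k + 1),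
            ((m.factorial * stirling (n+1) (m+1) : ℕ) : ℤ) *
            ((-1 : ℤ) ^ (k+c) * (c.factorial : ℤ) * (stirling k c : ℤ) * (c.choose m : ℤ)) := by
          rw [Finset.sum_comm]
          apply Finset.sum_congr rfl
          intro c _
          rw [expand c, Finset.mul_sum]
          apply Finset.sum_congr rfl
          intros
          push_cast
          ring
      _ = ∑ m ∈ Finset.range (n + 1),
          ((Nat.factorial m) ^ 2 * stirling (n + 1) (m + 1) * stirling (k + 1) (m + 1) : ℤ) := by
          apply Finset.sum_congr rfl
          intro m _
          rw [← Finset.mul_sum, stirling_alt k m]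
          push_cast
          ring
  -- put everything together
  have chain : ∑ j ∈ Finset.range (k + 1), (eulerian k j : ℤ) * Inner j
      = ∑ m ∈ Finset.range (n + 1),
          ((Nat.factorial m) ^ 2 * stirling (n + 1) (m + 1) * stirling (k + 1) (m + 1) : ℤ) := by
    rw [step1, step3, step4, step5]
  have extend : (∑ m ∈ Finset.range (min n k + 1),
        ((Nat.factorial m) ^ 2 * stirling (n + 1) (m + 1) * stirling (k + 1) (m + 1) : ℤ))
      = ∑ m ∈ Finset.range (n + 1),
          ((Nat.factorial m) ^ 2 * stirling (n + 1) (m + 1) * stirling (k + 1) (m + 1) : ℤ) := by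
    apply Finset.sum_subset
    · intro x hx
      simp only [Finset.mem_range] at *
      omega
    · intro x hx hx2
      simp only [Finset.mem_range] at *
      rw [stirling_eq_zero_of_lt (show k + 1 < x + 1 by omega)]
      simp
  rw [extend, ← chain]
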